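/- Let x, y be measurable functions on [0,∞) vanishing at infinity in measure with x submajorized by y (∫₀ᵗ x* ≤ ∫₀ᵗ y* for all t > 0), and let z be a nonnegative nonincreasing function. Then xz is submajorized by y* z: ∫₀ᵗ (xz)*(s) ds ≤ ∫₀ᵗ y*(s) z(s) ds for all t > 0. -/

import Mathlib

open MeasureTheory

/-- The decreasing rearrangement of `|f|` with respect to the measure `μ`. -/
noncomputable def rearr {α : Type*} [MeasurableSpace α] (μ : Measure α)
    (f : α → ℝ) (t : ℝ) : ℝ :=
  sInf {s : ℝ | 0 ≤ s ∧ μ {u | s < |f u|} ≤ ENNReal.ofReal t}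

/-- `f` vanishes at infinity in measure: every level set `{|f| > ε}` with `ε > 0`
has finite measure. -/
def VanishesInMeasure {α : Type*} [MeasurableSpace α] (μ : Measure α) (f : α → ℝ) : Prop :=
  ∀ ε : ℝ, 0 < ε → μ {u | ε < |f u|} < ⊤

/-- A symmetric function space on a measure space: a linear subspace of the measurable
functions vanishing at infinity in measure, with a complete norm that is monotone with
respect to comparison of decreasing rearrangements. -/
structure SymmFnSpace (α : Type*) [MeasurableSpace α] (μ : Measure α) where
  carrier : Set (α → ℝ)
  N : (α → ℝ) → ℝ
  zero_mem : (0 : α → ℝ) ∈ carrier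
  add_mem : ∀ {x y : α → ℝ}, x ∈ carrier → y ∈ carrier → x + y ∈ carrier
  smul_mem : ∀ (c : ℝ) {x : α → ℝ}, x ∈ carrier → c • x ∈ carrier
  measurable_mem : ∀ {x : α → ℝ}, x ∈ carrier → Measurable x
  vanish_mem : ∀ {x : α → ℝ}, x ∈ carrier → VanishesInMeasure μ x
  norm_nonneg : ∀ x : α → ℝ, 0 ≤ N x
  norm_eq_zero : ∀ {x : α → ℝ}, x ∈ carrier → N x = 0 → x =ᵐ[μ] 0
  norm_add_le : ∀ {x y : α → ℝ}, x ∈ carrier → y ∈ carrier → N (x + y) ≤ N x + N y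
  norm_smul : ∀ (c : ℝ) (x : α → ℝ), N (c • x) = |c| * N x
  symm : ∀ {x y : α → ℝ}, Measurable x → VanishesInMeasure μ x → y ∈ carrier →
    (∀ t : ℝ, 0 < t → rearr μ x t ≤ rearr μ y t) → x ∈ carrier ∧ N x ≤ N y
  complete : ∀ f : ℕ → (α → ℝ), (∀ n, f n ∈ carrier) →
    (∀ ε : ℝ, 0 < ε → ∃ n₀, ∀ m ≥ n₀, ∀ n ≥ n₀, N (f m - f n) < ε) →
    ∃ g ∈ carrier, ∀ ε : ℝ, 0 < ε → ∃ n₀, ∀ n ≥ n₀, N (f n - g) < ε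

open scoped ENNReal

/-- Lebesgue measure on the half-line `[0, ∞)`. -/
noncomputable def mu0 : MeasureTheory.Measure ℝ := MeasureTheory.volume.restrict (Set.Ici 0)

open Set

namespace Subm

noncomputable def df (f : ℝ → ℝ) (a : ℝ) : ℝ≥0∞ := mu0 {u | a < |f u|}

lemma df_antitone (f : ℝ → ℝ) : Antitone (df f) := fun _ _ hab =>
  measure_mono fun _ hu => lt_of_le_of_lt hab hu

lemma df_measurable (f : ℝ → ℝ) : Measurable (df f) := (df_antitone f).measurable

lemma df_of_nonneg {f : ℝ → ℝ} (h0 : ∀ u, 0 ≤ f u) (a : ℝ) :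
    df f a = mu0 {u | a < f u} := by
  unfold df; congr 1; ext u; simp [abs_of_nonneg (h0 u)]

lemma rearr_nonneg (f : ℝ → ℝ) (t : ℝ) : 0 ≤ rearr mu0 f t :=
  Real.sInf_nonneg fun _ hs => hs.1

/-- the key equivalence between rearrangement and distribution function -/
lemma ke {f : ℝ → ℝ} (hfm : Measurable f) (hfv : ∀ ε : ℝ, 0 < ε → df f ε < ⊤)
    {s : ℝ} (hs : 0 < s) {a : ℝ} (ha : 0 ≤ a) :
    a < rearr mu0 f s ↔ ENNReal.ofReal s < df f a := by
  set A := {v : ℝ | 0 ≤ v ∧ df f v ≤ ENNReal.ofReal s} with hA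
  have hmeas : ∀ b : ℝ, NullMeasurableSet {u : ℝ | b < |f u|} mu0 :=
    fun b => (measurableSet_lt measurable_const hfm.abs).nullMeasurableSet
  have hne : A.Nonempty := by
    by_contra hcon
    rw [Set.not_nonempty_iff_eq_empty] at hcon
    have hall : ∀ v : ℝ, 0 ≤ v → ENNReal.ofReal s < df f v := by
      intro v hv
      by_contra h
      push_neg at h
      have : v ∈ A := ⟨hv, h⟩
      simp [hcon] at this
    have hanti : Antitone (fun n : ℕ => {u : ℝ | (n : ℝ) + 1 < |f u|}) := by
      intro n m hnm u hu
      simp only [mem_setOf_eq] at hu ⊢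
      have : (n : ℝ) ≤ m := Nat.cast_le.mpr hnm
      linarith
    have hiI : (⋂ n : ℕ, {u : ℝ | (n : ℝ) + 1 < |f u|}) = ∅ := by
      ext u
      simp only [mem_iInter, mem_setOf_eq, mem_empty_iff_false, iff_false, not_forall, not_lt]
      obtain ⟨n, hn⟩ := exists_nat_gt (|f u|)
      exact ⟨n, by linarith⟩
    have hfin : ∃ n : ℕ, mu0 {u : ℝ | (n : ℝ) + 1 < |f u|} ≠ ∞ := by
      refine ⟨0, ?_⟩
      simp only [Nat.cast_zero, zero_add]
      exact (lt_of_le_of_lt (measure_mono fun u hu => hu) (hfv 1 one_pos)).ne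
    have := hanti.measure_iInter (μ := mu0) (fun _ => hmeas _) hfin
    rw [hiI, measure_empty] at this
    have hge : ENNReal.ofReal s ≤ ⨅ n : ℕ, mu0 {u : ℝ | (n : ℝ) + 1 < |f u|} :=
      le_iInf fun n => (hall ((n : ℝ) + 1) (by positivity)).le
    rw [← this] at hge
    exact absurd hge (by simpa using (ENNReal.ofReal_pos.mpr hs).ne')
  have hbdd : BddBelow A := ⟨0, fun v hv => hv.1⟩
  constructor
  · intro h
    by_contra hcon
    push_neg at hcon
    exact absurd (csInf_le hbdd (show a ∈ A from ⟨ha, hcon⟩)) (not_le.2 h)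
  · intro h
    by_contra hcon
    push_neg at hcon
    have key : ∀ ε : ℝ, 0 < ε → df f (a + ε) ≤ ENNReal.ofReal s := by
      intro ε hε
      obtain ⟨v, hvA, hvlt⟩ := Real.lt_sInf_add_pos hne hε
      have hva : v ≤ a + ε := by
        have : sInf A ≤ a := hcon
        linarith
      exact le_trans (df_antitone f hva) hvA.2
    have hun : {u : ℝ | a < |f u|} = ⋃ n : ℕ, {u : ℝ | a + 1 / ((n : ℝ) + 1) < |f u|} := by
      ext u
      simp only [mem_setOf_eq, mem_iUnion]
      constructor
      · intro hu
        obtain ⟨n, hn⟩ := exists_nat_one_div_lt (sub_pos.2 hu)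
        exact ⟨n, by linarith⟩
      · rintro ⟨n, hn⟩
        have : 0 < 1 / ((n : ℝ) + 1) := by positivity
        linarith
    have hdir : Directed (· ⊆ ·) (fun n : ℕ => {u : ℝ | a + 1 / ((n : ℝ) + 1) < |f u|}) := by
      apply Monotone.directed_le
      intro n m hnm u hu
      simp only [mem_setOf_eq] at hu ⊢
      have h1 : ((n : ℝ) + 1) ≤ ((m : ℝ) + 1) := by
        have : (n : ℝ) ≤ m := Nat.cast_le.mpr hnm
        linarith
      have h2 : 1 / ((m : ℝ) + 1) ≤ 1 / ((n : ℝ) + 1) :=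
        one_div_le_one_div_of_le (by positivity) h1
      linarith
    have : df f a ≤ ENNReal.ofReal s := by
      rw [df, hun, hdir.measure_iUnion]
      exact iSup_le fun n => key _ (by positivity)
    exact absurd this (not_le.2 h)

/-- volume of a down-closed set intersected with a "ball" -/
lemma seg' {S : Set ℝ} (hS : S ⊆ Ioi 0)
    (hdc : ∀ a ∈ S, ∀ b : ℝ, 0 < b → b ≤ a → b ∈ S) (c : ℝ≥0∞) :
    volume (S ∩ {s : ℝ | ENNReal.ofReal s < c}) = min (volume S) c := by
  rcases eq_or_ne c ⊤ with rfl | hc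
  · have h1 : S ∩ {s : ℝ | ENNReal.ofReal s < ⊤} = S :=
      inter_eq_left.2 fun s _ => by simp [ENNReal.ofReal_lt_top]
    rw [h1, min_eq_left le_top]
  · have hset : S ∩ {s : ℝ | ENNReal.ofReal s < c} = S ∩ Iio c.toReal := by
      ext s
      simp only [mem_inter_iff, mem_setOf_eq, mem_Iio, and_congr_right_iff]
      intro hsS
      exact ENNReal.ofReal_lt_iff_lt_toReal (le_of_lt (hS hsS)) hc
    rw [hset]
    by_cases hcase : ∀ a ∈ S, a < c.toReal
    · have h1 : S ∩ Iio c.toReal = S := inter_eq_left.2 fun a ha => hcase a ha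
      rw [h1, min_eq_left]
      calc volume S ≤ volume (Ioo 0 c.toReal) :=
            measure_mono fun a ha => ⟨hS ha, hcase a ha⟩
        _ = ENNReal.ofReal c.toReal := by rw [Real.volume_Ioo, sub_zero]
        _ ≤ c := ENNReal.ofReal_toReal_le
    · push_neg at hcase
      obtain ⟨a, haS, hca⟩ := hcase
      have h1 : S ∩ Iio c.toReal = Ioo 0 c.toReal := by
        apply Subset.antisymm
        · exact fun b hb => ⟨hS hb.1, hb.2⟩
        · exact fun b hb => ⟨hdc a haS b hb.1 (le_trans hb.2.le hca), hb.2⟩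
      have h2 : Ioo 0 c.toReal ⊆ S := fun b hb => hdc a haS b hb.1 (le_trans hb.2.le hca)
      rw [h1, Real.volume_Ioo, sub_zero, min_eq_right, ENNReal.ofReal_toReal hc]
      calc c = ENNReal.ofReal c.toReal := (ENNReal.ofReal_toReal hc).symm
        _ = volume (Ioo 0 c.toReal) := by rw [Real.volume_Ioo, sub_zero]
        _ ≤ volume S := measure_mono h2

lemma segIoc {D : Set ℝ} (hD : D ⊆ Ioi 0)
    (hdc : ∀ a ∈ D, ∀ b : ℝ, 0 < b → b ≤ a → b ∈ D) (t : ℝ) :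
    volume (D ∩ Ioc 0 t) = min (volume D) (ENNReal.ofReal t) := by
  by_cases hcase : Ioc 0 t ⊆ D
  · rw [inter_eq_right.2 hcase, Real.volume_Ioc, sub_zero, min_eq_right]
    calc ENNReal.ofReal t = volume (Ioc 0 t) := by rw [Real.volume_Ioc, sub_zero]
      _ ≤ volume D := measure_mono hcase
  · obtain ⟨u₀, hu₀I, hu₀D⟩ := not_subset.1 hcase
    have hsub : D ⊆ Ioo 0 u₀ := fun u hu =>
      ⟨hD hu, lt_of_not_ge fun h => hu₀D (hdc u hu u₀ hu₀I.1 h)⟩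
    have h1 : D ∩ Ioc 0 t = D := inter_eq_left.2 fun u hu =>
      ⟨hD hu, le_trans (hsub hu).2.le hu₀I.2⟩
    rw [h1, min_eq_left]
    calc volume D ≤ volume (Ioo 0 u₀) := measure_mono hsub
      _ = ENNReal.ofReal u₀ := by rw [Real.volume_Ioo, sub_zero]
      _ ≤ ENNReal.ofReal t := ENNReal.ofReal_le_ofReal hu₀I.2

/-- Fubini for the rearrangement with a weight. -/
lemma PLmul {f : ℝ → ℝ} (hfm : Measurable f) (hfv : ∀ ε : ℝ, 0 < ε → df f ε < ⊤)
    {S : Set ℝ} (hSm : MeasurableSet S) (hS : S ⊆ Ioi 0)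
    (h : ℝ → ℝ≥0∞) (hh : Measurable h) :
    ∫⁻ s in S, ENNReal.ofReal (rearr mu0 f s) * h s
      = ∫⁻ a in Ioi 0, ∫⁻ s in S ∩ {s' : ℝ | ENNReal.ofReal s' < df f a}, h s := by
  set M : Set (ℝ × ℝ) := {p | ENNReal.ofReal p.1 < df f p.2} with hM
  have hMm : MeasurableSet M :=
    measurableSet_lt (ENNReal.measurable_ofReal.comp measurable_fst)
      ((df_measurable f).comp measurable_snd)
  set k : ℝ → ℝ → ℝ≥0∞ := fun s a => M.indicator 1 (s, a) with hk
  have hkm : Measurable (fun p : ℝ × ℝ => k p.1 p.2) := by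
    simpa [hk] using (measurable_one.indicator hMm : Measurable (M.indicator 1))
  have hka : ∀ s, Measurable (fun a => k s a) :=
    fun s => hkm.comp (measurable_const.prodMk measurable_id)
  have step1 : ∀ s ∈ S, ENNReal.ofReal (rearr mu0 f s) = ∫⁻ a in Ioi 0, k s a := by
    intro s hsS
    have hs : 0 < s := hS hsS
    have hind : (fun a => k s a)
        = ({a : ℝ | ENNReal.ofReal s < df f a}).indicator 1 := by
      funext a
      simp only [hk, Set.indicator, hM, mem_setOf_eq, Pi.one_apply]
    have hAm : MeasurableSet {a : ℝ | ENNReal.ofReal s < df f a} :=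
      measurableSet_lt measurable_const (df_measurable f)
    rw [hind, lintegral_indicator_one₀ hAm.nullMeasurableSet]
    have hAset : {a : ℝ | ENNReal.ofReal s < df f a} ∩ Ioi 0 = Ioo 0 (rearr mu0 f s) := by
      ext a
      simp only [mem_inter_iff, mem_setOf_eq, mem_Ioi, mem_Ioo]
      constructor
      · rintro ⟨h1, h2⟩
        exact ⟨h2, (ke hfm hfv hs (le_of_lt h2)).mpr h1⟩
      · rintro ⟨h1, h2⟩
        exact ⟨(ke hfm hfv hs (le_of_lt h1)).mp h2, h1⟩
    rw [Measure.restrict_apply hAm, hAset, Real.volume_Ioo, sub_zero]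
  calc ∫⁻ s in S, ENNReal.ofReal (rearr mu0 f s) * h s
      = ∫⁻ s in S, (∫⁻ a in Ioi 0, k s a) * h s := by
        apply lintegral_congr_ae
        filter_upwards [ae_restrict_mem hSm] with s hsS
        rw [step1 s hsS]
    _ = ∫⁻ s in S, ∫⁻ a in Ioi 0, k s a * h s := by
        apply lintegral_congr
        intro s
        rw [lintegral_mul_const (h s) (hka s)]
    _ = ∫⁻ a in Ioi 0, ∫⁻ s in S, k s a * h s := by
        apply lintegral_lintegral_swap
        exact ((hkm.mul (hh.comp measurable_fst))).aemeasurable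
    _ = ∫⁻ a in Ioi 0, ∫⁻ s in S ∩ {s' : ℝ | ENNReal.ofReal s' < df f a}, h s := by
        apply lintegral_congr
        intro a
        have hind2 : (fun s => k s a * h s)
            = ({s' : ℝ | ENNReal.ofReal s' < df f a}).indicator h := by
          funext s
          simp only [hk, Set.indicator, hM, mem_setOf_eq, Pi.one_apply]
          by_cases hc : ENNReal.ofReal s < df f a <;> simp [hc]
        have hBm : MeasurableSet {s' : ℝ | ENNReal.ofReal s' < df f a} :=
          measurableSet_lt ENNReal.measurable_ofReal measurable_const
        rw [hind2, lintegral_indicator hBm, Measure.restrict_restrict hBm, inter_comm]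

/-- integral of the rearrangement over a down-closed set. -/
lemma PL {f : ℝ → ℝ} (hfm : Measurable f) (hfv : ∀ ε : ℝ, 0 < ε → df f ε < ⊤)
    {S : Set ℝ} (hSm : MeasurableSet S) (hS : S ⊆ Ioi 0)
    (hdc : ∀ a ∈ S, ∀ b : ℝ, 0 < b → b ≤ a → b ∈ S) :
    ∫⁻ s in S, ENNReal.ofReal (rearr mu0 f s)
      = ∫⁻ a in Ioi 0, min (volume S) (df f a) := by
  have h1 : ∫⁻ s in S, ENNReal.ofReal (rearr mu0 f s)
      = ∫⁻ s in S, ENNReal.ofReal (rearr mu0 f s) * (fun _ => (1 : ℝ≥0∞)) s := by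
    simp
  rw [h1, PLmul hfm hfv hSm hS _ measurable_const]
  apply lintegral_congr
  intro a
  rw [setLIntegral_one, seg' hS hdc]

/-- subsets of exact measure, via IVT. -/
lemma exists_subset_mu0 {A : Set ℝ} (hA : MeasurableSet A) (hfin : mu0 A ≠ ⊤) {r : ℝ≥0∞}
    (hr : r ≤ mu0 A) : ∃ E, E ⊆ A ∧ MeasurableSet E ∧ mu0 E = r := by
  rcases eq_or_ne r 0 with rfl | hr0
  · exact ⟨∅, empty_subset _, MeasurableSet.empty, measure_empty⟩
  rcases eq_or_lt_of_le hr with rfl | hrlt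
  · exact ⟨A, Subset.rfl, hA, rfl⟩
  have hrfin : r ≠ ⊤ := (lt_of_lt_of_le hrlt (le_top)).ne
  set φ : ℝ → ℝ := fun c => (mu0 (A ∩ Iic c)).toReal with hφ
  have hfinc : ∀ c, mu0 (A ∩ Iic c) ≠ ⊤ :=
    fun c => (lt_of_le_of_lt (measure_mono inter_subset_left) hfin.lt_top).ne
  have hmono : Monotone φ := by
    intro c d hcd
    apply ENNReal.toReal_mono (hfinc d)
    exact measure_mono (inter_subset_inter_right _ (Iic_subset_Iic.2 hcd))
  have hlip : LipschitzWith 1 φ := by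
    apply LipschitzWith.of_dist_le_mul
    intro c d
    wlog hcd : d ≤ c generalizing c d
    · rw [dist_comm, dist_comm c d]
      exact this d c (le_of_not_ge hcd)
    rw [Real.dist_eq, Real.dist_eq, abs_of_nonneg (sub_nonneg.2 (hmono hcd)),
      abs_of_nonneg (sub_nonneg.2 hcd), NNReal.coe_one, one_mul]
    have hsplit : mu0 (A ∩ Iic c) ≤ mu0 (A ∩ Iic d) + ENNReal.ofReal (c - d) := by
      calc mu0 (A ∩ Iic c) ≤ mu0 ((A ∩ Iic d) ∪ Ioc d c) := by
            apply measure_mono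
            rintro u ⟨huA, huc⟩
            rcases le_or_gt u d with h | h
            · exact Or.inl ⟨huA, h⟩
            · exact Or.inr ⟨h, huc⟩
        _ ≤ mu0 (A ∩ Iic d) + mu0 (Ioc d c) := measure_union_le _ _
        _ ≤ mu0 (A ∩ Iic d) + ENNReal.ofReal (c - d) := by
            gcongr
            calc mu0 (Ioc d c) ≤ volume (Ioc d c) := Measure.restrict_le_self _
              _ = ENNReal.ofReal (c - d) := Real.volume_Ioc
    have := ENNReal.toReal_mono
      (ENNReal.add_ne_top.2 ⟨hfinc d, ENNReal.ofReal_ne_top⟩) hsplit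
    rw [ENNReal.toReal_add (hfinc d) ENNReal.ofReal_ne_top,
      ENNReal.toReal_ofReal (sub_nonneg.2 hcd)] at this
    simp only [hφ] at this ⊢
    linarith
  have hcont : Continuous φ := hlip.continuous
  have hrt0 : 0 < r.toReal := ENNReal.toReal_pos hr0 hrfin
  have hrtlt : r.toReal < (mu0 A).toReal := ENNReal.toReal_strict_mono hfin hrlt
  have hc2 : ∃ c₂ : ℝ, r.toReal < φ c₂ := by
    have hU : (⋃ n : ℕ, A ∩ Iic (n : ℝ)) = A := by
      ext u
      simp only [mem_iUnion, mem_inter_iff, mem_Iic]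
      constructor
      · rintro ⟨n, h, _⟩; exact h
      · intro h
        obtain ⟨n, hn⟩ := exists_nat_gt u
        exact ⟨n, h, hn.le⟩
    have hm : Monotone (fun n : ℕ => A ∩ Iic (n : ℝ)) :=
      fun n m hnm => inter_subset_inter_right _ (Iic_subset_Iic.2 (Nat.cast_le.2 hnm))
    have h2 : Filter.Tendsto (fun n : ℕ => mu0 (A ∩ Iic (n : ℝ))) Filter.atTop (nhds (mu0 A)) := by
      have := tendsto_measure_iUnion_atTop (μ := mu0) hm
      rwa [hU] at this
    have h3 : Filter.Tendsto (fun n : ℕ => φ (n : ℝ)) Filter.atTop (nhds (mu0 A).toReal) :=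
      (ENNReal.tendsto_toReal hfin).comp h2
    obtain ⟨n, hn⟩ := (h3.eventually (eventually_gt_nhds hrtlt)).exists
    exact ⟨(n : ℝ), hn⟩
  have hc1 : ∃ c₁ : ℝ, φ c₁ < r.toReal := by
    have hI : (⋂ n : ℕ, A ∩ Iic (-(n : ℝ))) = ∅ := by
      ext u
      simp only [mem_iInter, mem_inter_iff, mem_Iic, mem_empty_iff_false, iff_false, not_forall]
      obtain ⟨n, hn⟩ := exists_nat_gt (-u)
      exact ⟨n, fun h => absurd h.2 (by linarith)⟩
    have hanti : Antitone (fun n : ℕ => A ∩ Iic (-(n : ℝ))) := by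
      intro n m hnm
      apply inter_subset_inter_right
      apply Iic_subset_Iic.2
      simp only [neg_le_neg_iff]
      exact_mod_cast hnm
    have h2 := tendsto_measure_iInter_atTop (μ := mu0)
      (fun n => ((hA.inter measurableSet_Iic).nullMeasurableSet))
      hanti ⟨0, hfinc _⟩
    rw [hI, measure_empty] at h2
    have h3 : Filter.Tendsto (fun n : ℕ => φ (-(n : ℝ))) Filter.atTop (nhds 0) := by
      have := (ENNReal.tendsto_toReal (by simp : (0:ℝ≥0∞) ≠ ⊤)).comp h2
      simpa [hφ, Function.comp_def] using this
    obtain ⟨n, hn⟩ := (h3.eventually (eventually_lt_nhds hrt0)).exists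
    exact ⟨(-(n : ℝ)), hn⟩
  obtain ⟨c₂, hc₂⟩ := hc2
  obtain ⟨c₁, hc₁⟩ := hc1
  obtain ⟨c, hc⟩ := intermediate_value_univ c₁ c₂ hcont ⟨hc₁.le, hc₂.le⟩
  refine ⟨A ∩ Iic c, inter_subset_left, hA.inter measurableSet_Iic, ?_⟩
  exact (ENNReal.toReal_eq_toReal_iff' (hfinc c) hrfin).mp hc

/-- Hardy–Littlewood type bound: the weighted integral is controlled by the
double integral of truncated distribution functions. -/
lemma A2 {x z' : ℝ → ℝ} (hxm : Measurable x)
    (hz'm : Measurable z') (hz'0 : ∀ u, 0 ≤ z' u) {t : ℝ}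
    (hVmin : ∀ b : ℝ, 0 < b → min (ENNReal.ofReal t) (mu0 {u : ℝ | b < z' u})
        = volume (Ioc 0 t ∩ {s : ℝ | b < z' s}))
    (ρ : ℝ → ℝ≥0∞) (hρm : Measurable ρ) (hρ1 : ∀ u, ρ u ≤ 1)
    (hρT : (∫⁻ u, ρ u ∂mu0) ≤ ENNReal.ofReal t) :
    (∫⁻ u, ENNReal.ofReal (|x u| * z' u) * ρ u ∂mu0)
      ≤ ∫⁻ b in Ioi 0, ∫⁻ a in Ioi 0,
          min (volume (Ioc 0 t ∩ {s : ℝ | b < z' s})) (df x a) := by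
  have hdens : Measurable (fun u => ENNReal.ofReal |x u| * ρ u) :=
    (ENNReal.measurable_ofReal.comp hxm.abs).mul hρm
  have h1 : (∫⁻ u, ENNReal.ofReal (|x u| * z' u) * ρ u ∂mu0)
      = ∫⁻ u, ENNReal.ofReal (z' u)
          ∂(mu0.withDensity (fun u => ENNReal.ofReal |x u| * ρ u)) := by
    rw [lintegral_withDensity_eq_lintegral_mul mu0 hdens hz'm.ennreal_ofReal]
    apply lintegral_congr
    intro u
    rw [ENNReal.ofReal_mul (abs_nonneg _)]
    simp only [Pi.mul_apply]
    ring
  rw [h1, lintegral_eq_lintegral_meas_lt _ (ae_of_all _ hz'0) hz'm.aemeasurable]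
  apply lintegral_mono_ae
  filter_upwards [ae_restrict_mem measurableSet_Ioi] with b hb
  have hzbm : MeasurableSet {u : ℝ | b < z' u} := measurableSet_lt measurable_const hz'm
  rw [withDensity_apply _ hzbm]
  set σ : ℝ → ℝ≥0∞ := fun u => ({u : ℝ | b < z' u}).indicator ρ u with hσ
  have hσm : Measurable σ := hρm.indicator hzbm
  have hσ1 : ∀ u, σ u ≤ 1 := fun u => le_trans (Set.indicator_le_self _ _ u) (hρ1 u)
  have hσint : (∫⁻ u, σ u ∂mu0) ≤ volume (Ioc 0 t ∩ {s : ℝ | b < z' s}) := by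
    rw [← hVmin b hb, le_min_iff]
    constructor
    · rw [hσ, lintegral_indicator hzbm]
      exact le_trans (setLIntegral_le_lintegral _ _) hρT
    · rw [hσ, lintegral_indicator hzbm]
      calc (∫⁻ u in {u : ℝ | b < z' u}, ρ u ∂mu0)
          ≤ ∫⁻ _ in {u : ℝ | b < z' u}, 1 ∂mu0 := lintegral_mono fun u => hρ1 u
        _ = mu0 {u : ℝ | b < z' u} := setLIntegral_one _
  have h2 : (∫⁻ u in {u : ℝ | b < z' u}, ENNReal.ofReal |x u| * ρ u ∂mu0)
      = ∫⁻ u, ENNReal.ofReal |x u| ∂(mu0.withDensity σ) := by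
    rw [lintegral_withDensity_eq_lintegral_mul mu0 hσm hxm.abs.ennreal_ofReal,
      ← lintegral_indicator hzbm]
    apply lintegral_congr
    intro u
    rw [hσ]
    by_cases hu : u ∈ {u : ℝ | b < z' u}
    · simp [Set.indicator_of_mem hu, Pi.mul_apply, mul_comm]
    · simp [Set.indicator_of_notMem hu, Pi.mul_apply]
  rw [h2, lintegral_eq_lintegral_meas_lt _ (ae_of_all _ (fun u => abs_nonneg (x u)))
    hxm.abs.aemeasurable]
  apply lintegral_mono_ae
  filter_upwards [ae_restrict_mem measurableSet_Ioi] with a _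
  have hxam : MeasurableSet {u : ℝ | a < |x u|} := measurableSet_lt measurable_const hxm.abs
  rw [withDensity_apply _ hxam]
  apply le_min
  · exact le_trans (setLIntegral_le_lintegral _ _) hσint
  · calc (∫⁻ u in {u : ℝ | a < |x u|}, σ u ∂mu0)
        ≤ ∫⁻ _ in {u : ℝ | a < |x u|}, 1 ∂mu0 := lintegral_mono fun u => hσ1 u
      _ = mu0 {u : ℝ | a < |x u|} := setLIntegral_one _
      _ = df x a := rfl


/-- reassembly of the right-hand side. -/
lemma RHSeq {y z' : ℝ → ℝ} (hym : Measurable y) (hyv : ∀ ε : ℝ, 0 < ε → df y ε < ⊤)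
    (hz'm : Measurable z') (hz'anti : Antitone z') (hz'0 : ∀ u, 0 ≤ z' u)
    (t : ℝ) :
    (∫⁻ b in Ioi 0, ∫⁻ a in Ioi 0,
        min (volume (Ioc 0 t ∩ {s : ℝ | b < z' s})) (df y a))
      = ∫⁻ s in Ioc 0 t, ENNReal.ofReal (rearr mu0 y s) * ENNReal.ofReal (z' s) := by
  have hVanti : Antitone (fun b : ℝ => volume (Ioc 0 t ∩ {s : ℝ | b < z' s})) := by
    intro b b' hbb'
    apply measure_mono
    exact inter_subset_inter_right _ (fun s hs => lt_of_le_of_lt hbb' hs)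
  have hVm : Measurable (fun b : ℝ => volume (Ioc 0 t ∩ {s : ℝ | b < z' s})) :=
    hVanti.measurable
  rw [PLmul hym hyv measurableSet_Ioc (fun s hs => hs.1) _ hz'm.ennreal_ofReal]
  rw [lintegral_lintegral_swap]
  swap
  · exact ((hVm.comp measurable_fst).min ((df_measurable y).comp measurable_snd)).aemeasurable
  apply lintegral_congr
  intro a
  have hEam : MeasurableSet {s' : ℝ | ENNReal.ofReal s' < df y a} :=
    measurableSet_lt ENNReal.measurable_ofReal measurable_const
  rw [lintegral_eq_lintegral_meas_lt _ (ae_of_all _ hz'0) hz'm.aemeasurable]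
  apply lintegral_congr_ae
  filter_upwards [ae_restrict_mem measurableSet_Ioi] with b _
  have hzbm : MeasurableSet {s : ℝ | b < z' s} := measurableSet_lt measurable_const hz'm
  rw [Measure.restrict_apply hzbm]
  have hSbsub : (Ioc 0 t ∩ {s : ℝ | b < z' s}) ⊆ Ioi 0 := fun s hs => hs.1.1
  have hSbdc : ∀ p ∈ Ioc 0 t ∩ {s : ℝ | b < z' s}, ∀ c : ℝ, 0 < c → c ≤ p →
      c ∈ Ioc 0 t ∩ {s : ℝ | b < z' s} :=
    fun p hp c hc hcp => ⟨⟨hc, le_trans hcp hp.1.2⟩, lt_of_lt_of_le hp.2 (hz'anti hcp)⟩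
  have hseg := seg' hSbsub hSbdc (df y a)
  have hsets : {s : ℝ | b < z' s} ∩ (Ioc 0 t ∩ {s' : ℝ | ENNReal.ofReal s' < df y a})
      = (Ioc 0 t ∩ {s : ℝ | b < z' s}) ∩ {s : ℝ | ENNReal.ofReal s < df y a} := by
    ext s
    simp only [mem_inter_iff, mem_setOf_eq]
    tauto
  rw [hsets, hseg]

end Subm


open Subm

/-- Stability of submajorization under multiplication by a nonnegative nonincreasing
function: if `x ≺≺ y` and `z ≥ 0` is nonincreasing, then `xz ≺≺ y^* z`. -/
theorem submajorization_mul_antitone {x y z : ℝ → ℝ}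
    (hxm : Measurable x) (hym : Measurable y)
    (hxv : VanishesInMeasure mu0 x) (hyv : VanishesInMeasure mu0 y)
    (hz0 : ∀ u, 0 ≤ z u) (hz : AntitoneOn z (Set.Ici 0))
    (hmaj : ∀ t : ℝ, 0 < t →
      (∫⁻ s in Set.Ioc 0 t, ENNReal.ofReal (rearr mu0 x s))
        ≤ ∫⁻ s in Set.Ioc 0 t, ENNReal.ofReal (rearr mu0 y s)) :
    ∀ t : ℝ, 0 < t →
      (∫⁻ s in Set.Ioc 0 t, ENNReal.ofReal (rearr mu0 (x * z) s))
        ≤ ∫⁻ s in Set.Ioc 0 t, ENNReal.ofReal (rearr mu0 y s * z s) := by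
  intro t ht
  have hxv' : ∀ ε : ℝ, 0 < ε → df x ε < ⊤ := fun ε hε => hxv ε hε
  have hyv' : ∀ ε : ℝ, 0 < ε → df y ε < ⊤ := fun ε hε => hyv ε hε
  obtain ⟨z', hz'def⟩ : ∃ z' : ℝ → ℝ, z' = fun u => z (max u 0) := ⟨_, rfl⟩
  have hz'anti : Antitone z' := by
    intro u v huv
    rw [hz'def]
    exact hz (Set.mem_Ici.mpr (le_max_right u 0)) (Set.mem_Ici.mpr (le_max_right v 0))
      (max_le_max huv le_rfl)
  have hz'm : Measurable z' := hz'anti.measurable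
  have hz'0 : ∀ u, 0 ≤ z' u := fun u => by rw [hz'def]; exact hz0 _
  have hz'eq : ∀ u : ℝ, 0 ≤ u → z' u = z u := fun u hu => by
    rw [hz'def]; simp [max_eq_left hu]
  have hz'le : ∀ u, z' u ≤ z 0 := fun u => by
    rw [hz'def]
    exact hz (Set.mem_Ici.mpr (le_refl 0)) (Set.mem_Ici.mpr (le_max_right u 0))
      (le_max_right u 0)
  obtain ⟨w', hw'def⟩ : ∃ w' : ℝ → ℝ, w' = fun u => |x u| * z' u := ⟨_, rfl⟩
  have hw'm : Measurable w' := by rw [hw'def]; exact hxm.abs.mul hz'm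
  have hw'0 : ∀ u, 0 ≤ w' u := fun u => by
    rw [hw'def]; exact mul_nonneg (abs_nonneg _) (hz'0 u)
  have hdfw : ∀ a, df w' a = mu0 {u | a < w' u} := df_of_nonneg hw'0
  have hdist : ∀ a : ℝ, mu0 {u | a < |(x * z) u|} = mu0 {u | a < |w' u|} := by
    intro a
    rw [mu0, Measure.restrict_apply' measurableSet_Ici,
      Measure.restrict_apply' measurableSet_Ici]
    congr 1
    ext u
    simp only [Set.mem_inter_iff, Set.mem_setOf_eq, Set.mem_Ici, Pi.mul_apply,
      and_congr_left_iff]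
    intro hu
    have hzz : |x u * z u| = |w' u| := by
      rw [hw'def, abs_mul, abs_mul, abs_abs, hz'eq u hu]
    rw [hzz]
  have hrearr_eq : ∀ s : ℝ, rearr mu0 (x * z) s = rearr mu0 w' s := by
    intro s
    unfold rearr
    congr 1
    ext v
    rw [Set.mem_setOf_eq, Set.mem_setOf_eq, hdist v]
  have hw'v : ∀ ε : ℝ, 0 < ε → df w' ε < ⊤ := by
    intro ε hε
    rw [df]
    rcases le_or_gt (z 0) 0 with hZ | hZ
    · have hempty : {u : ℝ | ε < |w' u|} = ∅ := by
        ext u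
        simp only [Set.mem_setOf_eq, Set.mem_empty_iff_false, iff_false, not_lt]
        have h1 : w' u ≤ 0 := by
          rw [hw'def]
          exact mul_nonpos_of_nonneg_of_nonpos (abs_nonneg _) (le_trans (hz'le u) hZ)
        rw [abs_of_nonneg (hw'0 u)]
        linarith [hw'0 u]
      rw [hempty]
      simp
    · have hsub : {u : ℝ | ε < |w' u|} ⊆ {u : ℝ | ε / z 0 < |x u|} := by
        intro u hu
        simp only [Set.mem_setOf_eq] at hu ⊢
        rw [abs_of_nonneg (hw'0 u)] at hu
        rw [div_lt_iff₀ hZ]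
        calc ε < w' u := hu
          _ = |x u| * z' u := by rw [hw'def]
          _ ≤ |x u| * z 0 := mul_le_mul_of_nonneg_left (hz'le u) (abs_nonneg _)
      exact lt_of_le_of_lt (measure_mono hsub) (hxv _ (div_pos hε hZ))
  have hVmin : ∀ b : ℝ, 0 < b → min (ENNReal.ofReal t) (mu0 {u : ℝ | b < z' u})
      = volume (Set.Ioc 0 t ∩ {s : ℝ | b < z' s}) := by
    intro b _
    have hD : ({u : ℝ | b < z' u} ∩ Set.Ioi 0) ⊆ Set.Ioi 0 := Set.inter_subset_right
    have hDdc : ∀ p ∈ {u : ℝ | b < z' u} ∩ Set.Ioi 0, ∀ c : ℝ, 0 < c → c ≤ p →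
        c ∈ {u : ℝ | b < z' u} ∩ Set.Ioi 0 :=
      fun p hp c hc hcp => ⟨lt_of_lt_of_le hp.1 (hz'anti hcp), hc⟩
    have h1 := segIoc hD hDdc t
    have h2 : Set.Ioc 0 t ∩ {s : ℝ | b < z' s}
        = ({u : ℝ | b < z' u} ∩ Set.Ioi 0) ∩ Set.Ioc 0 t := by
      ext s
      simp only [Set.mem_inter_iff, Set.mem_Ioc, Set.mem_setOf_eq, Set.mem_Ioi]
      tauto
    have h3 : mu0 {u : ℝ | b < z' u} = volume ({u : ℝ | b < z' u} ∩ Set.Ioi 0) := by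
      rw [mu0, Measure.restrict_apply' measurableSet_Ici]
      apply le_antisymm
      · calc volume ({u : ℝ | b < z' u} ∩ Set.Ici 0)
            ≤ volume (({u : ℝ | b < z' u} ∩ Set.Ioi 0) ∪ {(0:ℝ)}) := by
              apply measure_mono
              rintro u ⟨hu1, hu2⟩
              rcases eq_or_lt_of_le (show (0:ℝ) ≤ u from hu2) with h | h
              · exact Or.inr (by simp [← h])
              · exact Or.inl ⟨hu1, h⟩
          _ ≤ volume ({u : ℝ | b < z' u} ∩ Set.Ioi 0) + volume {(0:ℝ)} :=
              measure_union_le _ _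
          _ = volume ({u : ℝ | b < z' u} ∩ Set.Ioi 0) := by simp
      · exact measure_mono (Set.inter_subset_inter_right _ Set.Ioi_subset_Ici_self)
    rw [h3, h2, h1]
    exact min_comm _ _
  have hLHS : (∫⁻ s in Set.Ioc 0 t, ENNReal.ofReal (rearr mu0 (x * z) s))
      = ∫⁻ a in Set.Ioi 0, min (ENNReal.ofReal t) (df w' a) := by
    have h1 : (∫⁻ s in Set.Ioc 0 t, ENNReal.ofReal (rearr mu0 (x * z) s))
        = ∫⁻ s in Set.Ioc 0 t, ENNReal.ofReal (rearr mu0 w' s) :=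
      lintegral_congr fun s => by rw [hrearr_eq s]
    rw [h1, PL hw'm hw'v measurableSet_Ioc (fun s hs => hs.1)
      (fun p hp c hc hcp => ⟨hc, le_trans hcp hp.2⟩), Real.volume_Ioc, sub_zero]
  have hPsiXY : ∀ R : ℝ≥0∞, R ≤ ENNReal.ofReal t →
      (∫⁻ a in Set.Ioi 0, min R (df x a)) ≤ ∫⁻ a in Set.Ioi 0, min R (df y a) := by
    intro R hR
    rcases eq_or_ne R 0 with rfl | hR0
    · simp
    have hRfin : R ≠ ⊤ := (lt_of_le_of_lt hR ENNReal.ofReal_lt_top).ne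
    have hc0 : 0 < R.toReal := ENNReal.toReal_pos hR0 hRfin
    have hvol : volume (Set.Ioc (0:ℝ) R.toReal) = R := by
      rw [Real.volume_Ioc, sub_zero, ENNReal.ofReal_toReal hRfin]
    have hdc : ∀ p ∈ Set.Ioc (0:ℝ) R.toReal, ∀ c : ℝ, 0 < c → c ≤ p →
        c ∈ Set.Ioc (0:ℝ) R.toReal :=
      fun p hp c hc hcp => ⟨hc, le_trans hcp hp.2⟩
    have hx1 := PL hxm hxv' measurableSet_Ioc (fun s hs => hs.1) hdc
    have hy1 := PL hym hyv' measurableSet_Ioc (fun s hs => hs.1) hdc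
    rw [hvol] at hx1 hy1
    rw [← hx1, ← hy1]
    exact hmaj R.toReal hc0
  have hkey : ∀ ρ : ℝ → ℝ≥0∞, Measurable ρ → (∀ u, ρ u ≤ 1) →
      (∫⁻ u, ρ u ∂mu0) ≤ ENNReal.ofReal t →
      (∫⁻ u, ENNReal.ofReal (w' u) * ρ u ∂mu0)
        ≤ ∫⁻ b in Set.Ioi 0, ∫⁻ a in Set.Ioi 0,
            min (volume (Set.Ioc 0 t ∩ {s : ℝ | b < z' s})) (df x a) := by
    intro ρ h1 h2 h3
    have h4 := A2 hxm hz'm hz'0 hVmin ρ h1 h2 h3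
    have heq : (∫⁻ u, ENNReal.ofReal (w' u) * ρ u ∂mu0)
        = ∫⁻ u, ENNReal.ofReal (|x u| * z' u) * ρ u ∂mu0 :=
      lintegral_congr fun u => by rw [hw'def]
    rw [heq]
    exact h4
  have hA1 : (∫⁻ a in Set.Ioi 0, min (ENNReal.ofReal t) (df w' a))
      ≤ ∫⁻ b in Set.Ioi 0, ∫⁻ a in Set.Ioi 0,
          min (volume (Set.Ioc 0 t ∩ {s : ℝ | b < z' s})) (df x a) := by
    rcases (rearr_nonneg w' t).eq_or_lt with hl0 | hl0
    · -- rearr w' t = 0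
      have hdfle : ∀ a : ℝ, 0 < a → df w' a ≤ ENNReal.ofReal t := by
        intro a ha
        by_contra hcon
        push_neg at hcon
        have h4 := (ke hw'm hw'v ht (le_of_lt ha)).mpr hcon
        rw [← hl0] at h4
        exact absurd h4 (not_lt.2 ha.le)
      have hstep : (∫⁻ a in Set.Ioi 0, min (ENNReal.ofReal t) (df w' a))
          = ∫⁻ u, ENNReal.ofReal (w' u) ∂mu0 := by
        rw [lintegral_eq_lintegral_meas_lt mu0 (ae_of_all _ hw'0) hw'm.aemeasurable]
        apply lintegral_congr_ae
        filter_upwards [ae_restrict_mem measurableSet_Ioi] with a ha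
        rw [min_eq_right (hdfle a ha), hdfw a]
      rw [hstep]
      have hsetm : ∀ n : ℕ, MeasurableSet {u : ℝ | 1 / ((n : ℝ) + 1) < w' u} :=
        fun n => measurableSet_lt measurable_const hw'm
      obtain ⟨ρn, hρn⟩ : ∃ ρn : ℕ → ℝ → ℝ≥0∞,
          ρn = fun n : ℕ => ({u : ℝ | 1 / ((n : ℝ) + 1) < w' u}).indicator 1 := ⟨_, rfl⟩
      have hρnm : ∀ n, Measurable (ρn n) := fun n => by
        rw [hρn]; exact measurable_one.indicator (hsetm n)
      have hρn1 : ∀ n u, ρn n u ≤ 1 := by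
        intro n u
        simp only [hρn, Set.indicator_apply]
        split_ifs <;> simp
      have hmono : Monotone (fun n : ℕ => fun u => ENNReal.ofReal (w' u) * ρn n u) := by
        intro n m hnm u
        have hsub2 : {u : ℝ | 1 / ((n : ℝ) + 1) < w' u}
            ⊆ {u : ℝ | 1 / ((m : ℝ) + 1) < w' u} := by
          intro v hv
          simp only [Set.mem_setOf_eq] at hv ⊢
          have h5 : 1 / ((m : ℝ) + 1) ≤ 1 / ((n : ℝ) + 1) := by
            apply one_div_le_one_div_of_le (by positivity)
            have : (n : ℝ) ≤ m := Nat.cast_le.mpr hnm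
            linarith
          linarith
        simp only [hρn]
        exact mul_le_mul_right
          (Set.indicator_le_indicator_of_subset hsub2 (fun v => zero_le) u) _
      have hsup : ∀ u, (⨆ n, ENNReal.ofReal (w' u) * ρn n u) = ENNReal.ofReal (w' u) := by
        intro u
        rcases (hw'0 u).eq_or_lt with h0 | h0
        · simp [← h0]
        · obtain ⟨n, hn⟩ := exists_nat_one_div_lt h0
          apply le_antisymm
          · apply iSup_le
            intro m
            calc ENNReal.ofReal (w' u) * ρn m u ≤ ENNReal.ofReal (w' u) * 1 :=
                  mul_le_mul_right (hρn1 m u) _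
              _ = ENNReal.ofReal (w' u) := mul_one _
          · have hmem : u ∈ {u : ℝ | 1 / ((n : ℝ) + 1) < w' u} := hn
            have h5 : ρn n u = 1 := by
              simp only [hρn]
              rw [Set.indicator_of_mem hmem]; rfl
            calc ENNReal.ofReal (w' u) = ENNReal.ofReal (w' u) * ρn n u := by
                  rw [h5, mul_one]
              _ ≤ ⨆ m, ENNReal.ofReal (w' u) * ρn m u := le_iSup (fun m => ENNReal.ofReal (w' u) * ρn m u) n
      have hMCT := lintegral_iSup (μ := mu0)
        (fun n => (hw'm.ennreal_ofReal.mul (hρnm n))) hmono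
      have h6 : (∫⁻ u, ENNReal.ofReal (w' u) ∂mu0)
          = ⨆ n, ∫⁻ u, ENNReal.ofReal (w' u) * ρn n u ∂mu0 := by
        simp only [Pi.mul_apply] at hMCT
        rw [← hMCT]
        apply lintegral_congr
        intro u
        rw [hsup u]
      rw [h6]
      apply iSup_le
      intro n
      apply hkey (ρn n) (hρnm n) (hρn1 n)
      simp only [hρn]
      rw [lintegral_indicator_one (hsetm n)]
      have h7 := hdfle (1 / ((n : ℝ) + 1)) (by positivity)
      rwa [hdfw] at h7
    · -- 0 < rearr w' t
      have hd : df w' (rearr mu0 w' t) ≤ ENNReal.ofReal t := by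
        by_contra hcon
        push_neg at hcon
        exact absurd ((ke hw'm hw'v ht (rearr_nonneg w' t)).mpr hcon) (lt_irrefl _)
      have hTle : ENNReal.ofReal t ≤ mu0 {u : ℝ | rearr mu0 w' t ≤ w' u} := by
        have hiI : (⋂ n : ℕ, {u : ℝ | rearr mu0 w' t
              - rearr mu0 w' t / ((n : ℝ) + 2) < w' u})
            = {u : ℝ | rearr mu0 w' t ≤ w' u} := by
          ext u
          simp only [Set.mem_iInter, Set.mem_setOf_eq]
          constructor
          · intro h
            by_contra hcon
            push_neg at hcon
            have hpos : 0 < (rearr mu0 w' t - w' u) / rearr mu0 w' t :=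
              div_pos (by linarith) hl0
            obtain ⟨n, hn⟩ := exists_nat_one_div_lt hpos
            have h7 : rearr mu0 w' t / ((n : ℝ) + 2) < rearr mu0 w' t - w' u := by
              have h8 : rearr mu0 w' t / ((n : ℝ) + 2)
                  ≤ rearr mu0 w' t / ((n : ℝ) + 1) := by
                have hnn : 0 ≤ rearr mu0 w' t := hl0.le
                gcongr
                linarith
              have h10 : rearr mu0 w' t * (1 / ((n : ℝ) + 1))
                  < rearr mu0 w' t * ((rearr mu0 w' t - w' u) / rearr mu0 w' t) :=
                mul_lt_mul_of_pos_left hn hl0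
              have h11 : rearr mu0 w' t * ((rearr mu0 w' t - w' u) / rearr mu0 w' t)
                  = rearr mu0 w' t - w' u := by
                field_simp
              have h9 : rearr mu0 w' t / ((n : ℝ) + 1)
                  = rearr mu0 w' t * (1 / ((n : ℝ) + 1)) := by ring
              linarith
            have := h n
            linarith
          · intro h n
            have hpos : 0 < rearr mu0 w' t / ((n : ℝ) + 2) :=
              div_pos hl0 (by positivity)
            linarith
        have hanti : Antitone (fun n : ℕ =>
            {u : ℝ | rearr mu0 w' t - rearr mu0 w' t / ((n : ℝ) + 2) < w' u}) := by
          intro n m hnm u hu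
          simp only [Set.mem_setOf_eq] at hu ⊢
          have h12 : rearr mu0 w' t / ((m : ℝ) + 2)
              ≤ rearr mu0 w' t / ((n : ℝ) + 2) := by
            have hnn : 0 ≤ rearr mu0 w' t := hl0.le
            have : (n : ℝ) ≤ m := Nat.cast_le.mpr hnm
            gcongr
          linarith
        have hfin : ∃ n : ℕ, mu0 {u : ℝ | rearr mu0 w' t
            - rearr mu0 w' t / ((n : ℝ) + 2) < w' u} ≠ ⊤ := by
          refine ⟨0, ?_⟩
          have hhalf : 0 < rearr mu0 w' t - rearr mu0 w' t / (((0:ℕ) : ℝ) + 2) := by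
            have h13 : rearr mu0 w' t / (((0:ℕ) : ℝ) + 2) < rearr mu0 w' t := by
              rw [div_lt_iff₀ (by norm_num : (0:ℝ) < ((0:ℕ) : ℝ) + 2)]
              nlinarith
            linarith
          have h14 := hw'v _ hhalf
          rw [hdfw] at h14
          exact h14.ne
        have heq := hanti.measure_iInter (μ := mu0)
          (fun n => (measurableSet_lt measurable_const hw'm).nullMeasurableSet) hfin
        rw [hiI] at heq
        rw [heq]
        apply le_iInf
        intro n
        have ha0 : 0 ≤ rearr mu0 w' t - rearr mu0 w' t / ((n : ℝ) + 2) := by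
          have h15 : rearr mu0 w' t / ((n : ℝ) + 2) ≤ rearr mu0 w' t := by
            apply div_le_self hl0.le
            have : (0:ℝ) ≤ n := Nat.cast_nonneg n
            linarith
          linarith
        have halt : rearr mu0 w' t - rearr mu0 w' t / ((n : ℝ) + 2) < rearr mu0 w' t := by
          have : 0 < rearr mu0 w' t / ((n : ℝ) + 2) := div_pos hl0 (by positivity)
          linarith
        have h16 := (ke hw'm hw'v ht ha0).mp halt
        rw [hdfw] at h16
        exact h16.le
      have hfin2 : mu0 {u : ℝ | w' u = rearr mu0 w' t} ≠ ⊤ := by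
        have hsub : {u : ℝ | w' u = rearr mu0 w' t}
            ⊆ {u : ℝ | rearr mu0 w' t / 2 < w' u} := by
          intro u hu
          simp only [Set.mem_setOf_eq] at hu ⊢
          rw [hu]
          exact half_lt_self hl0
        have h14 := hw'v _ (half_pos hl0)
        rw [hdfw] at h14
        exact (lt_of_le_of_lt (measure_mono hsub) h14).ne
      have hTsub : ENNReal.ofReal t - df w' (rearr mu0 w' t)
          ≤ mu0 {u : ℝ | w' u = rearr mu0 w' t} := by
        rw [tsub_le_iff_right]
        calc ENNReal.ofReal t ≤ mu0 {u : ℝ | rearr mu0 w' t ≤ w' u} := hTle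
          _ ≤ mu0 ({u : ℝ | w' u = rearr mu0 w' t}
              ∪ {u : ℝ | rearr mu0 w' t < w' u}) := by
              apply measure_mono
              intro u hu
              rcases eq_or_lt_of_le (show rearr mu0 w' t ≤ w' u from hu) with h | h
              · exact Or.inl h.symm
              · exact Or.inr h
          _ ≤ mu0 {u : ℝ | w' u = rearr mu0 w' t}
              + mu0 {u : ℝ | rearr mu0 w' t < w' u} := measure_union_le _ _
          _ = mu0 {u : ℝ | w' u = rearr mu0 w' t} + df w' (rearr mu0 w' t) := by
              rw [hdfw]
      obtain ⟨E, hEsub, hEm, hEvol⟩ :=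
        exists_subset_mu0 (measurableSet_eq_fun hw'm measurable_const) hfin2 hTsub
      have hsetlm : MeasurableSet {u : ℝ | rearr mu0 w' t < w' u} :=
        measurableSet_lt measurable_const hw'm
      obtain ⟨ρ, hρdef⟩ : ∃ ρ : ℝ → ℝ≥0∞,
          ρ = fun u => ({u : ℝ | rearr mu0 w' t < w' u}).indicator 1 u
            + E.indicator 1 u := ⟨_, rfl⟩
      have hρm : Measurable ρ := by
        simp only [hρdef]
        exact (measurable_one.indicator hsetlm).add (measurable_one.indicator hEm)
      have hρ1 : ∀ u, ρ u ≤ 1 := by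
        intro u
        simp only [hρdef]
        by_cases h1 : u ∈ {u : ℝ | rearr mu0 w' t < w' u}
        · have h2 : u ∉ E := by
            intro hc
            have h3 := hEsub hc
            simp only [Set.mem_setOf_eq] at h1 h3
            linarith
          simp [Set.indicator_of_mem h1, Set.indicator_of_notMem h2]
        · simp only [Set.indicator_of_notMem h1, zero_add]
          by_cases h2 : u ∈ E
          · simp [Set.indicator_of_mem h2]
          · simp [Set.indicator_of_notMem h2]
      have hρint : (∫⁻ u, ρ u ∂mu0) = ENNReal.ofReal t := by
        simp only [hρdef]
        rw [lintegral_add_left (measurable_one.indicator hsetlm)]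
        rw [lintegral_indicator_one hsetlm, lintegral_indicator_one hEm, hEvol]
        rw [← hdfw]
        exact add_tsub_cancel_of_le hd
      have hbound : (∫⁻ a in Set.Ioi 0, min (ENNReal.ofReal t) (df w' a))
          ≤ ∫⁻ u, ENNReal.ofReal (w' u) * ρ u ∂mu0 := by
        have h1 : (∫⁻ u, ENNReal.ofReal (w' u) * ρ u ∂mu0)
            = ∫⁻ u, ENNReal.ofReal (w' u) ∂(mu0.withDensity ρ) := by
          rw [lintegral_withDensity_eq_lintegral_mul mu0 hρm hw'm.ennreal_ofReal]
          apply lintegral_congr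
          intro u
          simp only [Pi.mul_apply]
          ring
        rw [h1, lintegral_eq_lintegral_meas_lt _ (ae_of_all _ hw'0) hw'm.aemeasurable]
        apply lintegral_mono_ae
        filter_upwards [ae_restrict_mem measurableSet_Ioi] with a _
        have hseta : MeasurableSet {u : ℝ | a < w' u} :=
          measurableSet_lt measurable_const hw'm
        rw [withDensity_apply _ hseta]
        have hsplit : (∫⁻ u in {u : ℝ | a < w' u}, ρ u ∂mu0)
            = mu0 ({u : ℝ | rearr mu0 w' t < w' u} ∩ {u : ℝ | a < w' u})
              + mu0 (E ∩ {u : ℝ | a < w' u}) := by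
          simp only [hρdef]
          rw [lintegral_add_left (measurable_one.indicator hsetlm),
            lintegral_indicator_one hsetlm, lintegral_indicator_one hEm,
            Measure.restrict_apply hsetlm, Measure.restrict_apply hEm]
        rw [hsplit]
        rcases le_or_gt (rearr mu0 w' t) a with hla | hla
        · have h15 : {u : ℝ | rearr mu0 w' t < w' u} ∩ {u : ℝ | a < w' u}
              = {u : ℝ | a < w' u} :=
            Set.inter_eq_right.2 fun u hu => lt_of_le_of_lt hla hu
          rw [h15]
          calc min (ENNReal.ofReal t) (df w' a) ≤ df w' a := min_le_right _ _
            _ = mu0 {u : ℝ | a < w' u} := hdfw a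
            _ ≤ _ := le_self_add
        · have h16 : {u : ℝ | rearr mu0 w' t < w' u} ∩ {u : ℝ | a < w' u}
              = {u : ℝ | rearr mu0 w' t < w' u} :=
            Set.inter_eq_left.2 fun u hu => lt_trans hla hu
          have h17 : E ∩ {u : ℝ | a < w' u} = E := by
            apply Set.inter_eq_left.2
            intro u hu
            have h18 := hEsub hu
            simp only [Set.mem_setOf_eq] at h18 ⊢
            rw [h18]
            exact hla
          rw [h16, h17, hEvol, ← hdfw, add_tsub_cancel_of_le hd]
          exact min_le_left _ _
      exact le_trans hbound (hkey ρ hρm hρ1 (le_of_eq hρint))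
  calc (∫⁻ s in Set.Ioc 0 t, ENNReal.ofReal (rearr mu0 (x * z) s))
      = ∫⁻ a in Set.Ioi 0, min (ENNReal.ofReal t) (df w' a) := hLHS
    _ ≤ ∫⁻ b in Set.Ioi 0, ∫⁻ a in Set.Ioi 0,
          min (volume (Set.Ioc 0 t ∩ {s : ℝ | b < z' s})) (df x a) := hA1
    _ ≤ ∫⁻ b in Set.Ioi 0, ∫⁻ a in Set.Ioi 0,
          min (volume (Set.Ioc 0 t ∩ {s : ℝ | b < z' s})) (df y a) := by
        apply lintegral_mono
        intro b
        apply hPsiXY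
        calc volume (Set.Ioc 0 t ∩ {s : ℝ | b < z' s}) ≤ volume (Set.Ioc 0 t) :=
              measure_mono Set.inter_subset_left
          _ = ENNReal.ofReal t := by rw [Real.volume_Ioc, sub_zero]
    _ = ∫⁻ s in Set.Ioc 0 t, ENNReal.ofReal (rearr mu0 y s) * ENNReal.ofReal (z' s) :=
        RHSeq hym hyv' hz'm hz'anti hz'0 t
    _ = ∫⁻ s in Set.Ioc 0 t, ENNReal.ofReal (rearr mu0 y s * z s) := by
        apply lintegral_congr_ae
        filter_upwards [ae_restrict_mem measurableSet_Ioc] with s hs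
        rw [hz'eq s (le_of_lt hs.1), ← ENNReal.ofReal_mul (rearr_nonneg y s)]
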